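/- Let A be a Prüfer domain with field of fractions K and let f = r/s ∈ K(X) with r, s ∈ K[X] nonzero. Then there exists a nonzero polynomial p ∈ K[X] such that the fractional ideal of A generated by the coefficients of p equals the fractional ideal content c(r)·c(s)⁻¹, where c denotes the fractional ideal of A generated by the coefficients of a polynomial. -/

import Mathlib

/-- The content of a polynomial p ∈ K[X]: the fractional ideal of A generated by the
coefficients of p. -/
noncomputable def polyContent (A : Type*) [CommRing A] {K : Type*} [Field K]
    [Algebra A K] [IsFractionRing A K] (p : Polynomial K) :
    FractionalIdeal (nonZeroDivisors A) K :=
  FractionalIdeal.spanFinset A p.support (fun n => p.coeff n)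

open Polynomial in
/-- Any fractional ideal whose underlying submodule is spanned by a finite set is the
content of some polynomial. -/
lemma exists_polyContent_eq {A : Type*} [CommRing A] [IsDomain A] {K : Type*} [Field K]
    [Algebra A K] [IsFractionRing A K] (I : FractionalIdeal (nonZeroDivisors A) K)
    (hfg : (I : Submodule A K).FG) : ∃ p : Polynomial K, polyContent A p = I := by
  obtain ⟨T, hT⟩ := hfg
  classical
  set l : List K := T.toList with hl
  set p : Polynomial K := ∑ i ∈ Finset.range l.length, Polynomial.C (l.getD i 0) * X ^ i
    with hp
  have hcoeff : ∀ j, p.coeff j = if j < l.length then l.getD j 0 else 0 := by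
    intro j
    rw [hp, Polynomial.finset_sum_coeff]
    simp only [Polynomial.coeff_C_mul, Polynomial.coeff_X_pow, mul_ite, mul_one, mul_zero]
    rw [Finset.sum_ite_eq (Finset.range l.length) j (fun i => l.getD i 0)]
    simp [Finset.mem_range]
  refine ⟨p, ?_⟩
  rw [← FractionalIdeal.coeToSubmodule_inj, polyContent, FractionalIdeal.spanFinset_coe, ← hT]
  apply le_antisymm
  · rw [Submodule.span_le]
    rintro x ⟨j, hj, rfl⟩
    rw [Finset.mem_coe, Polynomial.mem_support_iff] at hj
    have hjlt : j < l.length := by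
      by_contra h
      exact hj (by rw [hcoeff]; simp [h])
    show p.coeff j ∈ _
    rw [hcoeff, if_pos hjlt]
    apply Submodule.subset_span
    simp only [Finset.mem_coe]
    rw [List.getD_eq_getElem l 0 hjlt]
    have := List.getElem_mem (l := l) (n := j) hjlt
    exact Finset.mem_toList.mp this
  · rw [Submodule.span_le]
    intro x hx
    have hxl : x ∈ l := Finset.mem_toList.mpr hx
    obtain ⟨j, hjlt, hjx⟩ := List.mem_iff_getElem.mp hxl
    by_cases hx0 : x = 0
    · simp [hx0]
    · apply Submodule.subset_span
      refine ⟨j, ?_, ?_⟩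
      · rw [Finset.mem_coe, Polynomial.mem_support_iff, hcoeff, if_pos hjlt,
          List.getD_eq_getElem l 0 hjlt, hjx]
        exact hx0
      · show p.coeff j = x
        rw [hcoeff, if_pos hjlt, List.getD_eq_getElem l 0 hjlt, hjx]

/-- In a Prüfer domain A with fraction field K, for any f = r/s in K(X) there is a
nonzero polynomial p with content c(p) = c(r) · c(s)⁻¹. -/
theorem stmt_15 {A : Type*} [CommRing A] [IsDomain A] {K : Type*} [Field K]
    [Algebra A K] [IsFractionRing A K]
    (hpruefer : ∀ I : FractionalIdeal (nonZeroDivisors A) K,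
      I ≠ 0 → (I : Submodule A K).FG → I * I⁻¹ = 1)
    (r s : Polynomial K) (hr : r ≠ 0) (hs : s ≠ 0) :
    ∃ p : Polynomial K, p ≠ 0 ∧
      polyContent A p = polyContent A r * (polyContent A s)⁻¹ := by
  classical
  have hcfg : ∀ q : Polynomial K, ((polyContent A q : FractionalIdeal (nonZeroDivisors A) K)
      : Submodule A K).FG := by
    intro q
    rw [polyContent, FractionalIdeal.spanFinset_coe]
    exact Submodule.fg_span ((q.support.finite_toSet).image _)
  have hcne : ∀ q : Polynomial K, q ≠ 0 → polyContent A q ≠ 0 := by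
    intro q hq
    rw [polyContent, FractionalIdeal.spanFinset_ne_zero]
    have hn : q.coeff q.natDegree ≠ 0 := Polynomial.leadingCoeff_ne_zero.mpr hq
    exact ⟨q.natDegree, Polynomial.mem_support_iff.mpr hn, hn⟩
  have hrne := hcne r hr
  have hsne := hcne s hs
  have hsinv : polyContent A s * (polyContent A s)⁻¹ = 1 := hpruefer _ hsne (hcfg s)
  have hsinv_ne : (polyContent A s)⁻¹ ≠ 0 := by
    intro h
    rw [h, mul_zero] at hsinv
    exact zero_ne_one hsinv
  have hsinv_unit : IsUnit (polyContent A s)⁻¹ := IsUnit.of_mul_eq_one _ (by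
    rw [mul_comm]; exact hsinv)
  set I := polyContent A r * (polyContent A s)⁻¹ with hI
  have hIne : I ≠ 0 := by
    intro h
    apply hrne
    have h2 : polyContent A r * ((polyContent A s)⁻¹ * polyContent A s) = 0 := by
      rw [← mul_assoc, ← hI, h, zero_mul]
    rwa [mul_comm (polyContent A s)⁻¹, hsinv, mul_one] at h2
  have hIfg : (I : Submodule A K).FG := by
    rw [hI, FractionalIdeal.coe_mul]
    exact Submodule.FG.mul (hcfg r) (FractionalIdeal.fg_of_isUnit _ hsinv_unit)
  obtain ⟨p, hp⟩ := exists_polyContent_eq I hIfg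
  refine ⟨p, ?_, hp⟩
  intro h0
  apply hIne
  rw [← hp, h0, polyContent]
  simp [FractionalIdeal.spanFinset_eq_zero]
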